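/- Let d ∈ {1,2,3}, p = p(d) (p(1) = 3, p(2) = 2√2, p(3) = (1+√17)/2), and a > 0. There exist constants R₀ > 2 and c > 0, depending only on d and a, with the following property: whenever u₁, u₂ : (1,∞) → ℝ are nonnegative, twice differentiable, both satisfy the radial equation w''(r) + ((d−1)/r)·w'(r) = w(r)² for all r > 1, u₂(r) ≤ u₁(r) for all r > 1, u₁(r) → 0 as r → ∞, and u₁(r) ≤ 2(4−d)/r² + a·r^{−p} for all r ≥ R₀, then for all R and r with R₀ ≤ R ≤ r, one has u₁(r) − u₂(r) ≥ c·(R/r)^p · (u₁(R) − u₂(R)). -/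

import Mathlib

open Real Filter

/-- Second derivative test at a local minimum: if `f` has a local min at `x`,
is differentiable near `x`, and `deriv f` has derivative `L` at `x`, then `0 ≤ L`. -/
lemma aux_second_deriv_nonneg {f : ℝ → ℝ} {x L : ℝ} (hmin : IsLocalMin f x)
    (hf : ∀ᶠ y in nhds x, DifferentiableAt ℝ f y)
    (hL : HasDerivAt (deriv f) L x) : 0 ≤ L := by
  by_contra hneg
  push_neg at hneg
  have h0 : deriv f x = 0 := hmin.deriv_eq_zero
  have hslope : Tendsto (slope (deriv f) x) (nhdsWithin x {x}ᶜ) (nhds L) :=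
    hasDerivAt_iff_tendsto_slope.1 hL
  have hev : ∀ᶠ y in nhdsWithin x (Set.Ioi x), slope (deriv f) x y < 0 :=
    (hslope.mono_left (nhdsWithin_mono x (fun y hy => ne_of_gt hy))).eventually
      (eventually_lt_nhds hneg)
  have hev2 : ∀ᶠ y in nhdsWithin x (Set.Ioi x), deriv f y < 0 := by
    filter_upwards [hev, self_mem_nhdsWithin] with y hy hy'
    have hs : (deriv f y - deriv f x) / (y - x) < 0 := by
      simpa [slope_def_field] using hy
    rw [h0, sub_zero] at hs
    have hyx : (0:ℝ) < y - x := sub_pos.2 hy'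
    rcases div_neg_iff.1 hs with ⟨_, h⟩ | ⟨h, _⟩
    · linarith
    · exact h
  have hminev : ∀ᶠ y in nhdsWithin x (Set.Ioi x), f x ≤ f y :=
    (hmin.filter_mono nhdsWithin_le_nhds)
  have hfev : ∀ᶠ y in nhdsWithin x (Set.Ioi x), DifferentiableAt ℝ f y :=
    hf.filter_mono nhdsWithin_le_nhds
  have hmem : ∀ᶠ y in nhdsWithin x (Set.Ioi x),
      deriv f y < 0 ∧ f x ≤ f y ∧ DifferentiableAt ℝ f y := by
    filter_upwards [hev2, hminev, hfev] with y h1 h2 h3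
    exact ⟨h1, h2, h3⟩
  rw [Filter.Eventually, mem_nhdsGT_iff_exists_Ioo_subset] at hmem
  obtain ⟨u, hu, hsub⟩ := hmem
  have hxu : x < u := hu
  set y0 := (x + u) / 2 with hy0def
  have hy0x : x < y0 := by simp only [hy0def]; linarith
  have hy0u : y0 < u := by simp only [hy0def]; linarith
  have hanti : StrictAntiOn f (Set.Icc x y0) := by
    apply strictAntiOn_of_deriv_neg (convex_Icc _ _)
    · intro t ht
      rcases eq_or_lt_of_le ht.1 with h | h
      · rw [← h]
        exact (hf.self_of_nhds).continuousAt.continuousWithinAt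
      · exact ((hsub ⟨h, lt_of_le_of_lt ht.2 hy0u⟩).2.2).continuousAt.continuousWithinAt
    · intro t ht
      rw [interior_Icc] at ht
      exact (hsub ⟨ht.1, lt_trans ht.2 hy0u⟩).1
  have h1 : f y0 < f x :=
    hanti ⟨le_refl x, hy0x.le⟩ ⟨hy0x.le, le_refl y0⟩ hy0x
  have h2 : f x ≤ f y0 := (hsub ⟨hy0x, hy0u⟩).2.1
  linarith

/-- Algebraic identity used for the barrier computation. -/
lemma aux_barrier_identity (dd q s δ C A a X z : ℝ) (hz : z ≠ 0)
    (hs : s = 2 * q - 2) (hδ : δ = (q - 2) * (3 * q - dd)) :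
    2 * (2 * (4 - dd) / z ^ 2 + a * X) * (A * X + A * C * (X ^ 2 * z ^ 2))
      - (dd - 1) / z * (A * -q * (X * z⁻¹) + A * C * -s * (X ^ 2 * z))
      - (A * -q * (-q - 1) * (X / z ^ 2) + A * C * -s * (-s - 1) * X ^ 2)
    = A * X ^ 2 * (2 * a + 2 * a * C * (X * z ^ 2) - C * δ)
      + (4 * (4 - dd) - (q ^ 2 - (dd - 2) * q)) * (A * X / z ^ 2 + A * C * X ^ 2) := by
  subst hs hδ
  field_simp
  ring

set_option maxHeartbeats 1000000 in
/-- Proposition 4.3(c), radial form: matching lower bound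
`u₁(r) - u₂(r) ≥ c (R/r)^p (u₁(R) - u₂(R))` for `R₀ ≤ R ≤ r`, with constants
`R₀ > 2` and `c > 0` depending only on `d` and `a`. -/
theorem stmt8 (d : ℕ) (hd : d = 1 ∨ d = 2 ∨ d = 3) (p : ℝ)
    (hp : (d = 1 ∧ p = 3) ∨ (d = 2 ∧ p = 2 * Real.sqrt 2) ∨
      (d = 3 ∧ p = (1 + Real.sqrt 17) / 2))
    (a : ℝ) (ha : 0 < a) :
    ∃ R₀ c : ℝ, 2 < R₀ ∧ 0 < c ∧
      ∀ u₁ u₂ : ℝ → ℝ,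
        (∀ r > (1 : ℝ), 0 ≤ u₁ r) → (∀ r > (1 : ℝ), 0 ≤ u₂ r) →
        (∀ r > (1 : ℝ), DifferentiableAt ℝ u₁ r) →
        (∀ r > (1 : ℝ), DifferentiableAt ℝ (deriv u₁) r) →
        (∀ r > (1 : ℝ), DifferentiableAt ℝ u₂ r) →
        (∀ r > (1 : ℝ), DifferentiableAt ℝ (deriv u₂) r) →
        (∀ r > (1 : ℝ),
          deriv (deriv u₁) r + ((d : ℝ) - 1) / r * deriv u₁ r = (u₁ r) ^ 2) →
        (∀ r > (1 : ℝ),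
          deriv (deriv u₂) r + ((d : ℝ) - 1) / r * deriv u₂ r = (u₂ r) ^ 2) →
        (∀ r > (1 : ℝ), u₂ r ≤ u₁ r) →
        Tendsto u₁ atTop (nhds 0) →
        (∀ r ≥ R₀, u₁ r ≤ 2 * (4 - (d : ℝ)) / r ^ 2 + a * r ^ (-p)) →
        ∀ R r : ℝ, R₀ ≤ R → R ≤ r →
          c * (R / r) ^ p * (u₁ R - u₂ R) ≤ u₁ r - u₂ r := by
  -- basic facts about p
  have hp2 : 2 < p := by
    rcases hp with ⟨_, rfl⟩ | ⟨_, rfl⟩ | ⟨_, rfl⟩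
    · norm_num
    · nlinarith [Real.sq_sqrt (by norm_num : (0:ℝ) ≤ 2), Real.sqrt_nonneg 2]
    · nlinarith [Real.sq_sqrt (by norm_num : (0:ℝ) ≤ 17), Real.sqrt_nonneg 17]
  have hd3 : (d : ℝ) ≤ 3 := by
    rcases hd with rfl | rfl | rfl <;> norm_num
  have hμ : p ^ 2 - ((d : ℝ) - 2) * p = 4 * (4 - (d : ℝ)) := by
    rcases hp with ⟨rfl, rfl⟩ | ⟨rfl, rfl⟩ | ⟨rfl, rfl⟩
    · norm_num
    · have := Real.sq_sqrt (by norm_num : (0:ℝ) ≤ 2)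
      push_cast
      nlinarith [this]
    · have := Real.sq_sqrt (by norm_num : (0:ℝ) ≤ 17)
      push_cast
      nlinarith [this]
  set δ : ℝ := (p - 2) * (3 * p - (d : ℝ)) with hδdef
  have hδ : 0 < δ := by
    apply mul_pos <;> linarith
  set C : ℝ := 6 * a / δ with hCdef
  have hC : 0 < C := by positivity
  have hCδ : C * δ = 6 * a := by
    rw [hCdef]; field_simp
  set R₀ : ℝ := 3 + C ^ (1 / (p - 2)) with hR₀def
  have hCpow : (0:ℝ) ≤ C ^ (1 / (p - 2)) := Real.rpow_nonneg hC.le _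
  have hR₀2 : 2 < R₀ := by rw [hR₀def]; linarith
  set c : ℝ := 1 / (1 + C) with hcdef
  have hc : 0 < c := by positivity
  -- key smallness fact
  have hCx : ∀ x : ℝ, R₀ ≤ x → C * x ^ (2 - p) ≤ 1 := by
    intro x hx
    have hx0 : (0:ℝ) < x := by linarith
    have h1 : C ≤ x ^ (p - 2) := by
      have e : (C ^ (1 / (p - 2))) ^ (p - 2) = C := by
        rw [← Real.rpow_mul hC.le, one_div, inv_mul_cancel₀ (by linarith : p - 2 ≠ 0),
          Real.rpow_one]
      calc C = (C ^ (1 / (p - 2))) ^ (p - 2) := e.symm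
        _ ≤ x ^ (p - 2) := by
            apply Real.rpow_le_rpow hCpow (by rw [hR₀def] at hx; linarith) (by linarith)
    have e2 : x ^ (2 - p) = (x ^ (p - 2))⁻¹ := by
      rw [show (2 - p) = -(p - 2) by ring, Real.rpow_neg hx0.le]
    have hxp : (0:ℝ) < x ^ (p - 2) := Real.rpow_pos_of_pos hx0 _
    rw [e2, ← div_eq_mul_inv]
    exact (div_le_one hxp).2 h1
  clear_value δ C R₀ c
  refine ⟨R₀, c, hR₀2, hc, ?_⟩
  intro u₁ u₂ h1n h2n h1d h1dd h2d h2dd hode1 hode2 hle htend hbound R r hRR hrr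
  have hR1 : (1:ℝ) < R := by linarith
  have hR0 : (0:ℝ) < R := by linarith
  have hr1 : (1:ℝ) < r := by linarith
  have hr0 : (0:ℝ) < r := by linarith
  -- trivial case
  by_cases hDR : u₁ R - u₂ R ≤ 0
  · have hq : (0:ℝ) ≤ c * (R / r) ^ p :=
      mul_nonneg hc.le (Real.rpow_nonneg (div_nonneg hR0.le hr0.le) _)
    have h1 : c * (R / r) ^ p * (u₁ R - u₂ R) ≤ 0 := mul_nonpos_of_nonneg_of_nonpos hq hDR
    have h2 : 0 ≤ u₁ r - u₂ r := sub_nonneg.2 (hle r hr1)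
    linarith
  push_neg at hDR
  set s : ℝ := 2 * p - 2 with hsdef
  have hRp : (0:ℝ) < R ^ p := Real.rpow_pos_of_pos hR0 _
  set A : ℝ := (u₁ R - u₂ R) * R ^ p / (1 + C) with hAdef
  have hA : 0 < A := by
    rw [hAdef]
    exact div_pos (mul_pos hDR hRp) (by positivity)
  set V : ℝ → ℝ := fun x => A * x ^ (-p) + A * C * x ^ (-s) with hVdef
  set V1 : ℝ → ℝ := fun x => A * -p * x ^ (-p - 1) + A * C * -s * x ^ (-s - 1) with hV1def
  set V2 : ℝ → ℝ := fun x => A * -p * (-p - 1) * x ^ (-p - 2)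
      + A * C * -s * (-s - 1) * x ^ (-s - 2) with hV2def
  set w : ℝ → ℝ := fun x => (u₁ x - u₂ x) - V x with hwdef
  clear_value s A V V1 V2 w
  -- derivatives of V
  have hVd : ∀ x : ℝ, 0 < x → HasDerivAt V (V1 x) x := by
    intro x hx
    rw [hVdef]
    have h1 := (Real.hasDerivAt_rpow_const (x := x) (p := -p) (Or.inl hx.ne')).const_mul A
    have h2 := (Real.hasDerivAt_rpow_const (x := x) (p := -s) (Or.inl hx.ne')).const_mul (A * C)
    have h3 := h1.add h2
    have : V1 x = A * (-p * x ^ (-p - 1)) + A * C * (-s * x ^ (-s - 1)) := by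
      rw [hV1def]; ring
    rw [this]
    exact h3
  have hV1d : ∀ x : ℝ, 0 < x → HasDerivAt V1 (V2 x) x := by
    intro x hx
    rw [hV1def]
    have h1 := (Real.hasDerivAt_rpow_const (x := x) (p := -p - 1) (Or.inl hx.ne')).const_mul
      (A * -p)
    have h2 := (Real.hasDerivAt_rpow_const (x := x) (p := -s - 1) (Or.inl hx.ne')).const_mul
      (A * C * -s)
    have h3 := h1.add h2
    have e1 : -p - 1 - 1 = -p - 2 := by ring
    have e2 : -s - 1 - 1 = -s - 2 := by ring
    rw [e1, e2] at h3
    have : V2 x = A * -p * ((-p - 1) * x ^ (-p - 2)) + A * C * -s * ((-s - 1) * x ^ (-s - 2)) := by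
      rw [hV2def]; ring
    rw [this]
    exact h3
  -- derivatives of w
  have hw : ∀ x : ℝ, 1 < x → HasDerivAt w (deriv u₁ x - deriv u₂ x - V1 x) x := by
    intro x hx
    rw [hwdef]
    exact (((h1d x hx).hasDerivAt.sub (h2d x hx).hasDerivAt).sub (hVd x (by linarith)))
  have hwd : ∀ x : ℝ, 1 < x → DifferentiableAt ℝ w x := fun x hx => (hw x hx).differentiableAt
  have hwderiv : ∀ x : ℝ, 1 < x → deriv w x = deriv u₁ x - deriv u₂ x - V1 x :=
    fun x hx => (hw x hx).deriv
  have hww : ∀ x : ℝ, 1 < x →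
      HasDerivAt (deriv w) (deriv (deriv u₁) x - deriv (deriv u₂) x - V2 x) x := by
    intro x hx
    have hg : HasDerivAt (fun y => deriv u₁ y - deriv u₂ y - V1 y)
        (deriv (deriv u₁) x - deriv (deriv u₂) x - V2 x) x :=
      ((h1dd x hx).hasDerivAt.sub (h2dd x hx).hasDerivAt).sub (hV1d x (by linarith))
    apply hg.congr_of_eventuallyEq
    filter_upwards [Ioi_mem_nhds hx] with y hy
    exact hwderiv y hy
  -- w R ≥ 0
  have hwR : 0 ≤ w R := by
    have e1 : R ^ p * R ^ (-p) = 1 := by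
      rw [← Real.rpow_add hR0]; simp
    have e2 : R ^ p * R ^ (-s) = R ^ (2 - p) := by
      rw [← Real.rpow_add hR0]; congr 1; rw [hsdef]; ring
    have hRp1 : R ^ (2 - p) ≤ 1 :=
      Real.rpow_le_one_of_one_le_of_nonpos hR1.le (by linarith)
    have hRp0 : (0:ℝ) ≤ R ^ (2 - p) := Real.rpow_nonneg hR0.le _
    have key : V R ≤ u₁ R - u₂ R := by
      have expand : V R = (u₁ R - u₂ R) / (1 + C) * (R ^ p * R ^ (-p))
          + (u₁ R - u₂ R) * C / (1 + C) * (R ^ p * R ^ (-s)) := by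
        rw [hVdef, hAdef]; ring
      have h1C : (0:ℝ) < 1 + C := by positivity
      rw [expand, e1, e2, mul_one, div_mul_eq_mul_div, ← add_div, div_le_iff₀ h1C]
      have hprod : 0 ≤ (u₁ R - u₂ R) * C * (1 - R ^ (2 - p)) :=
        mul_nonneg (mul_nonneg hDR.le hC.le) (by linarith)
      linarith [hprod]
    have : w R = (u₁ R - u₂ R) - V R := by rw [hwdef]
    rw [this]
    linarith
  -- w tends to 0 at infinity
  have hwtop : Tendsto w atTop (nhds 0) := by
    have hDtop : Tendsto (fun x => u₁ x - u₂ x) atTop (nhds 0) := by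
      apply squeeze_zero' (g := u₁)
      · filter_upwards [eventually_gt_atTop (1:ℝ)] with x hx
        exact sub_nonneg.2 (hle x hx)
      · filter_upwards [eventually_gt_atTop (1:ℝ)] with x hx
        have := h2n x hx; linarith
      · exact htend
    have hVtop : Tendsto V atTop (nhds 0) := by
      rw [hVdef]
      have t1 := (tendsto_rpow_neg_atTop (by linarith : (0:ℝ) < p)).const_mul A
      have t2 := (tendsto_rpow_neg_atTop (show (0:ℝ) < s by rw [hsdef]; linarith)).const_mul (A * C)
      have := t1.add t2
      simpa using this
    have heq : w = fun x => (u₁ x - u₂ x) - V x := hwdef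
    rw [heq]
    simpa using hDtop.sub hVtop
  -- main claim: w ≥ 0 on [R, ∞)
  have hkey : ∀ x : ℝ, R ≤ x → 0 ≤ w x := by
    by_contra hcon
    push_neg at hcon
    obtain ⟨x₀, hx₀R, hx₀⟩ := hcon
    obtain ⟨T, hT⟩ := (eventually_atTop.1
      (hwtop.eventually (eventually_gt_nhds (show w x₀ / 2 < 0 by linarith))))
    set T' : ℝ := max T (x₀ + 1) with hT'def
    clear_value T'
    have hx₀T' : x₀ ≤ T' := by rw [hT'def]; exact le_trans (by linarith) (le_max_right _ _)
    have hRT' : R ≤ T' := le_trans hx₀R hx₀T'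
    have hcont : ContinuousOn w (Set.Icc R T') := by
      intro y hy
      exact ((hwd y (lt_of_lt_of_le hR1 hy.1)).continuousAt).continuousWithinAt
    obtain ⟨z, hzmem, hzmin⟩ :=
      isCompact_Icc.exists_isMinOn (Set.nonempty_Icc.2 hRT') hcont
    have hx₀mem : x₀ ∈ Set.Icc R T' := ⟨hx₀R, hx₀T'⟩
    have hwz : w z ≤ w x₀ := hzmin hx₀mem
    have hwzneg : w z < 0 := lt_of_le_of_lt hwz hx₀
    have hzR : R < z := by
      rcases lt_or_eq_of_le hzmem.1 with h | h
      · exact h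
      · exfalso; rw [← h] at hwzneg; linarith
    have hwT' : w x₀ / 2 < w T' := hT T' (by rw [hT'def]; exact le_max_left _ _)
    have hzT : z < T' := by
      rcases lt_or_eq_of_le hzmem.2 with h | h
      · exact h
      · exfalso; rw [h] at hwzneg hwz; linarith
    have hz1 : (1:ℝ) < z := lt_trans hR1 hzR
    have hz0 : (0:ℝ) < z := by linarith
    have hzR₀ : R₀ ≤ z := by linarith
    have hlocmin : IsLocalMin w z := hzmin.isLocalMin (Icc_mem_nhds hzR hzT)
    have hderiv0 : deriv w z = 0 := hlocmin.deriv_eq_zero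
    have hV1eq : deriv u₁ z - deriv u₂ z = V1 z := by
      have := hwderiv z hz1
      rw [hderiv0] at this
      linarith
    have h2nd : 0 ≤ deriv (deriv u₁) z - deriv (deriv u₂) z - V2 z := by
      apply aux_second_deriv_nonneg hlocmin _ (hww z hz1)
      filter_upwards [Ioi_mem_nhds hz1] with y hy
      exact hwd y hy
    -- use the ODEs
    have hode : deriv (deriv u₁) z - deriv (deriv u₂) z
        = (u₁ z) ^ 2 - (u₂ z) ^ 2 - ((d : ℝ) - 1) / z * V1 z := by
      have e1 := hode1 z hz1
      have e2 := hode2 z hz1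
      rw [← hV1eq]
      linarith [e1, e2]
    have hE0 : 0 ≤ (u₁ z) ^ 2 - (u₂ z) ^ 2 - ((d : ℝ) - 1) / z * V1 z - V2 z := by
      rw [hode] at h2nd; linarith
    -- bound the nonlinearity
    have hrpow_p : (0:ℝ) ≤ z ^ (-p) := Real.rpow_nonneg hz0.le _
    have hrpow_s : (0:ℝ) ≤ z ^ (-s) := Real.rpow_nonneg hz0.le _
    have hVz : 0 ≤ V z := by
      have : V z = A * z ^ (-p) + A * C * z ^ (-s) := by rw [hVdef]
      rw [this]
      exact add_nonneg (mul_nonneg hA.le hrpow_p) (mul_nonneg (mul_nonneg hA.le hC.le) hrpow_s)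
    have hDVz : u₁ z - u₂ z ≤ V z := by
      have : w z = (u₁ z - u₂ z) - V z := by rw [hwdef]
      rw [this] at hwzneg
      linarith
    have hB := hbound z hzR₀
    have hBnn : 0 ≤ 2 * (4 - (d : ℝ)) / z ^ 2 + a * z ^ (-p) :=
      le_trans (h1n z hz1) hB
    have hsq : (u₁ z) ^ 2 - (u₂ z) ^ 2
        ≤ 2 * (2 * (4 - (d : ℝ)) / z ^ 2 + a * z ^ (-p)) * V z := by
      have hp1 : 0 ≤ (2 * (4 - (d : ℝ)) / z ^ 2 + a * z ^ (-p)) * (V z - (u₁ z - u₂ z)) :=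
        mul_nonneg hBnn (by linarith)
      have hp2 : 0 ≤ (u₁ z - u₂ z) * ((2 * (4 - (d : ℝ)) / z ^ 2 + a * z ^ (-p)) - u₁ z) :=
        mul_nonneg (sub_nonneg.2 (hle z hz1)) (by linarith)
      have hp3 : 0 ≤ (u₁ z - u₂ z) ^ 2 := sq_nonneg _
      linarith [hp1, hp2, hp3]
    have hE1 : 0 ≤ 2 * (2 * (4 - (d : ℝ)) / z ^ 2 + a * z ^ (-p)) * V z
        - ((d : ℝ) - 1) / z * V1 z - V2 z := by linarith
    -- rewrite everything in terms of X = z ^ (-p)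
    set X : ℝ := z ^ (-p) with hXdef
    have hX : 0 < X := by rw [hXdef]; exact Real.rpow_pos_of_pos hz0 _
    clear_value X
    have ez2 : z ^ (2:ℝ) = z ^ 2 := by
      rw [show (2:ℝ) = ((2:ℕ):ℝ) by norm_num, Real.rpow_natCast]
    have e_s : z ^ (-s) = X ^ 2 * z ^ 2 := by
      rw [hXdef, show -s = -p + (-p + (2:ℝ)) by rw [hsdef]; ring, Real.rpow_add hz0,
        Real.rpow_add hz0, ez2]
      ring
    have e_p1 : z ^ (-p - 1) = X * z⁻¹ := by
      rw [hXdef, show -p - 1 = -p + (-1:ℝ) by ring, Real.rpow_add hz0, Real.rpow_neg_one]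
    have e_p2 : z ^ (-p - 2) = X / z ^ 2 := by
      rw [hXdef, show -p - 2 = -p + (-(2:ℝ)) by ring, Real.rpow_add hz0]
      rw [show z ^ (-(2:ℝ)) = (z ^ (2:ℝ))⁻¹ from Real.rpow_neg hz0.le 2, ez2]
      ring
    have e_s1 : z ^ (-s - 1) = X ^ 2 * z := by
      rw [hXdef, show -s - 1 = -p + (-p + (1:ℝ)) by rw [hsdef]; ring, Real.rpow_add hz0,
        Real.rpow_add hz0, Real.rpow_one]
      ring_nf
    have e_s2 : z ^ (-s - 2) = X ^ 2 := by
      rw [hXdef, show -s - 2 = -p + (-p:ℝ) by rw [hsdef]; ring, Real.rpow_add hz0]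
      ring
    have e_2p : z ^ (2 - p) = X * z ^ 2 := by
      rw [hXdef, show 2 - p = -p + (2:ℝ) by ring, Real.rpow_add hz0, ez2]
    have hCz : C * (X * z ^ 2) ≤ 1 := by
      rw [← e_2p]; exact hCx z hzR₀
    have hVzeq : V z = A * X + A * C * (X ^ 2 * z ^ 2) := by
      simp only [hVdef]; rw [e_s, ← hXdef]
    have hV1zeq : V1 z = A * -p * (X * z⁻¹) + A * C * -s * (X ^ 2 * z) := by
      simp only [hV1def]; rw [e_p1, e_s1]
    have hV2zeq : V2 z = A * -p * (-p - 1) * (X / z ^ 2) + A * C * -s * (-s - 1) * X ^ 2 := by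
      simp only [hV2def]; rw [e_p2, e_s2]
    rw [hVzeq, hV1zeq, hV2zeq,
      aux_barrier_identity (d : ℝ) p s δ C A a X z hz0.ne' hsdef hδdef, hμ, sub_self,
      zero_mul, add_zero, hCδ] at hE1
    have hG : 2 * a + 2 * a * C * (X * z ^ 2) - 6 * a < 0 := by
      have := mul_nonneg ha.le (sub_nonneg.2 hCz)
      linarith [this]
    have hAX2 : 0 < A * X ^ 2 := mul_pos hA (by positivity)
    have hfin : 0 < A * X ^ 2 * (-(2 * a + 2 * a * C * (X * z ^ 2) - 6 * a)) :=
      mul_pos hAX2 (by linarith)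
    linarith [hE1, hfin]
  -- conclude
  have hwr := hkey r hrr
  have e1 : r ^ p * r ^ (-p) = 1 := by
    rw [← Real.rpow_add hr0]; simp
  have hrp : (0:ℝ) < r ^ p := Real.rpow_pos_of_pos hr0 _
  have e2 : (R / r) ^ p = R ^ p / r ^ p := Real.div_rpow hR0.le hr0.le p
  have e3 : c * (R / r) ^ p * (u₁ R - u₂ R) = A * r ^ (-p) := by
    rw [e2, hcdef, hAdef, show r ^ (-p) = (r ^ p)⁻¹ by rw [Real.rpow_neg hr0.le]]
    field_simp
  have hVr : A * r ^ (-p) ≤ V r := by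
    have hACr : 0 ≤ A * C * r ^ (-s) :=
      mul_nonneg (mul_nonneg hA.le hC.le) (Real.rpow_nonneg hr0.le _)
    have : V r = A * r ^ (-p) + A * C * r ^ (-s) := by rw [hVdef]
    rw [this]
    linarith
  have hwr' : V r ≤ u₁ r - u₂ r := by
    have : w r = (u₁ r - u₂ r) - V r := by rw [hwdef]
    rw [this] at hwr
    linarith
  rw [e3]
  linarith
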